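/- Let n ≥ 1, let M be a positive semidefinite complex matrix indexed by pairs (Fin n × Fin n) (i.e., an n²×n² matrix acting on ℂⁿ ⊗ ℂⁿ), and let α ≥ 0. Suppose that for all unit vectors e, f ∈ ℂⁿ, the quadratic form of M at the Kronecker product e ⊗ f is at most α, i.e. (e ⊗ f)ᴴ M (e ⊗ f) ≤ α (this quantity is a nonnegative real since M is positive semidefinite). Then for every unit vector ψ ∈ ℂⁿ ⊗ ℂⁿ (equivalently, ψ : Fin n × Fin n → ℂ with ‖ψ‖ = 1), one has ψᴴ M ψ ≤ α · n²; in particular every eigenvalue of M, and hence λ_max(M), is at most α · n². -/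

import Mathlib

open Matrix
open scoped ComplexOrder

private lemma re_dot_self {ι : Type*} [Fintype ι] (x : ι → ℂ) :
    (star x ⬝ᵥ x).re = ∑ i, ‖x i‖ ^ 2 := by
  rw [dotProduct, Complex.re_sum]
  refine Finset.sum_congr rfl fun i _ => ?_
  simp only [Pi.star_apply, Complex.star_def, Complex.mul_re, Complex.conj_re,
    Complex.conj_im, Complex.sq_norm, Complex.normSq_apply]
  ring

private lemma cs_dot {ι : Type*} [Fintype ι] (x y : ι → ℂ) :
    ‖star x ⬝ᵥ y‖ ≤ Real.sqrt (∑ i, ‖x i‖ ^ 2) * Real.sqrt (∑ i, ‖y i‖ ^ 2) := by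
  let X : EuclideanSpace ℂ ι := (WithLp.equiv 2 _).symm x
  let Y : EuclideanSpace ℂ ι := (WithLp.equiv 2 _).symm y
  have h1 : (inner ℂ X Y : ℂ) = star x ⬝ᵥ y := by
    simp [inner, dotProduct, X, Y, mul_comm]
  have := norm_inner_le_norm (𝕜 := ℂ) X Y
  rw [h1, EuclideanSpace.norm_eq, EuclideanSpace.norm_eq] at this
  exact this

theorem psd_product_bound_implies_global_bound
    (n : ℕ) (hn : 1 ≤ n)
    (M : Matrix (Fin n × Fin n) (Fin n × Fin n) ℂ) (hM : M.PosSemidef)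
    (α : ℝ) (hα : 0 ≤ α)
    (hprod : ∀ e f : Fin n → ℂ,
      (∑ i, ‖e i‖ ^ 2) = 1 → (∑ i, ‖f i‖ ^ 2) = 1 →
      (star (fun p : Fin n × Fin n => e p.1 * f p.2) ⬝ᵥ
        M *ᵥ (fun p : Fin n × Fin n => e p.1 * f p.2)).re ≤ α) :
    (∀ ψ : Fin n × Fin n → ℂ, (∑ p, ‖ψ p‖ ^ 2) = 1 →
      (star ψ ⬝ᵥ M *ᵥ ψ).re ≤ α * (n : ℝ) ^ 2) ∧
    (∀ i : Fin n × Fin n, hM.isHermitian.eigenvalues i ≤ α * (n : ℝ) ^ 2) := by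
  obtain ⟨B, hB⟩ : ∃ B : Matrix (Fin n × Fin n) (Fin n × Fin n) ℂ, M = Bᴴ * B := by
    open scoped MatrixOrder Matrix.Norms.L2Operator in
    exact CStarAlgebra.nonneg_iff_eq_star_mul_self.mp hM.nonneg
  -- factorization of the quadratic form
  have hQ : ∀ u v : Fin n × Fin n → ℂ,
      star u ⬝ᵥ M *ᵥ v = star (B *ᵥ u) ⬝ᵥ (B *ᵥ v) := by
    intro u v
    rw [hB, ← mulVec_mulVec, star_mulVec, ← dotProduct_mulVec]
  -- basis vectors are product vectors with unit norm
  have hsingle_norm : ∀ i : Fin n, (∑ j, ‖(Pi.single i 1 : Fin n → ℂ) j‖ ^ 2) = 1 := by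
    intro i
    rw [Fintype.sum_eq_single i]
    · simp
    · intro j hj; simp [Pi.single_apply, hj]
  have hdiag : ∀ p : Fin n × Fin n,
      (star ((Pi.single p 1 : Fin n × Fin n → ℂ)) ⬝ᵥ M *ᵥ (Pi.single p 1)).re ≤ α := by
    intro p
    have := hprod (Pi.single p.1 1) (Pi.single p.2 1) (hsingle_norm p.1) (hsingle_norm p.2)
    have hfun : (fun q : Fin n × Fin n =>
        (Pi.single p.1 1 : Fin n → ℂ) q.1 * (Pi.single p.2 1 : Fin n → ℂ) q.2)
        = (Pi.single p 1 : Fin n × Fin n → ℂ) := by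
      funext q
      rcases p with ⟨p1, p2⟩; rcases q with ⟨q1, q2⟩
      by_cases h1 : q1 = p1 <;> by_cases h2 : q2 = p2 <;>
        simp [Pi.single_apply, h1, h2, Prod.ext_iff]
    rwa [hfun] at this
  -- column vectors
  set c : Fin n × Fin n → (Fin n × Fin n → ℂ) := fun p => B *ᵥ Pi.single p 1 with hc
  have hcol : ∀ p, ∑ i, ‖c p i‖ ^ 2 ≤ α := by
    intro p
    have := hdiag p
    rwa [hQ, re_dot_self] at this
  have hcol0 : ∀ p, 0 ≤ ∑ i, ‖c p i‖ ^ 2 := fun p =>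
    Finset.sum_nonneg fun i _ => sq_nonneg _
  -- entrywise bound ‖M p q‖ ≤ α
  have hent : ∀ p q, ‖M p q‖ ≤ α := by
    intro p q
    have hMpq : M p q = star (c p) ⬝ᵥ (c q) := by
      rw [← hQ]
      have hstar : star (Pi.single p 1 : Fin n × Fin n → ℂ) = Pi.single p 1 := by
        funext r; by_cases h : r = p <;> simp [Pi.single_apply, h]
      rw [hstar, single_dotProduct, one_mul]
      simp [mulVec, dotProduct_single]
    rw [hMpq]
    calc ‖star (c p) ⬝ᵥ (c q)‖
        ≤ Real.sqrt (∑ i, ‖c p i‖ ^ 2) * Real.sqrt (∑ i, ‖c q i‖ ^ 2) := cs_dot _ _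
      _ ≤ Real.sqrt α * Real.sqrt α :=
          mul_le_mul (Real.sqrt_le_sqrt (hcol p)) (Real.sqrt_le_sqrt (hcol q))
            (Real.sqrt_nonneg _) (Real.sqrt_nonneg _)
      _ = α := Real.mul_self_sqrt hα
  -- main bound
  have main : ∀ ψ : Fin n × Fin n → ℂ, (∑ p, ‖ψ p‖ ^ 2) = 1 →
      (star ψ ⬝ᵥ M *ᵥ ψ).re ≤ α * (n : ℝ) ^ 2 := by
    intro ψ hψ
    have hexp : star ψ ⬝ᵥ M *ᵥ ψ = ∑ p, ∑ q, star (ψ p) * M p q * ψ q := by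
      simp [dotProduct, mulVec, Finset.mul_sum, mul_assoc]
    have h1 : (star ψ ⬝ᵥ M *ᵥ ψ).re ≤ ‖star ψ ⬝ᵥ M *ᵥ ψ‖ := Complex.re_le_norm _
    have h2 : ‖star ψ ⬝ᵥ M *ᵥ ψ‖ ≤ ∑ p, ∑ q, ‖ψ p‖ * α * ‖ψ q‖ := by
      rw [hexp]
      refine (norm_sum_le _ _).trans (Finset.sum_le_sum fun p _ => ?_)
      refine (norm_sum_le _ _).trans (Finset.sum_le_sum fun q _ => ?_)
      rw [norm_mul, norm_mul, norm_star]
      exact mul_le_mul_of_nonneg_right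
        (mul_le_mul_of_nonneg_left (hent p q) (norm_nonneg _)) (norm_nonneg _)
    have h3 : (∑ p, ∑ q, ‖ψ p‖ * α * ‖ψ q‖) = α * (∑ p, ‖ψ p‖) ^ 2 := by
      rw [sq]
      rw [Finset.sum_mul_sum]
      rw [Finset.mul_sum]
      refine Finset.sum_congr rfl fun p _ => ?_
      rw [Finset.mul_sum]
      exact Finset.sum_congr rfl fun q _ => by ring
    have h4 : (∑ p, ‖ψ p‖) ^ 2 ≤ (n : ℝ) ^ 2 := by
      have := sq_sum_le_card_mul_sum_sq (s := Finset.univ) (f := fun p : Fin n × Fin n => ‖ψ p‖)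
      rw [hψ] at this
      simpa [sq] using this
    calc (star ψ ⬝ᵥ M *ᵥ ψ).re ≤ ∑ p, ∑ q, ‖ψ p‖ * α * ‖ψ q‖ := h1.trans h2
      _ = α * (∑ p, ‖ψ p‖) ^ 2 := h3
      _ ≤ α * (n : ℝ) ^ 2 := by gcongr
  refine ⟨main, fun i => ?_⟩
  have hev := hM.isHermitian.eigenvalues_eq i
  have hnorm : (∑ p, ‖(hM.isHermitian.eigenvectorBasis i : Fin n × Fin n → ℂ) p‖ ^ 2) = 1 := by
    have h1 : ‖hM.isHermitian.eigenvectorBasis i‖ = 1 :=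
      hM.isHermitian.eigenvectorBasis.orthonormal.1 i
    rw [EuclideanSpace.norm_eq] at h1
    have := congrArg (· ^ 2) h1
    simpa [Real.sq_sqrt (Finset.sum_nonneg fun p _ => sq_nonneg _)] using this
  have := main _ hnorm
  rw [hev]
  exact this
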